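/- Let (α,u) be a bypass in Q. Then exactly one of the following holds: either φ_{α,u,τ}(I_0) = I_0 for every τ ∈ k, or φ_{α,u,τ}(I_0) ≠ I_0 for every τ ∈ k^*. -/

import Mathlib

attribute [local instance] Classical.propDecidable

/-- A quiver given by a set of vertices, a set of arrows and source/target maps. -/
structure Quiv where
  V : Type
  A : Type
  s : A → V
  t : A → V

namespace Quiv

section Basic

variable (Q : Quiv)

/-- A (nontrivial) path is a nonempty list of composable arrows, listed in the
order they are traversed. -/
def IsPath (p : List Q.A) : Prop :=
  p ≠ [] ∧ p.Chain' (fun a b => Q.t a = Q.s b)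

/-- Source of a nonempty list of arrows. -/
def src (p : List Q.A) : Option Q.V := p.head?.map Q.s

/-- Target of a nonempty list of arrows. -/
def tgt (p : List Q.A) : Option Q.V := p.getLast?.map Q.t

/-- `Q` has no oriented cycle: no nontrivial path has equal source and target. -/
def NoCycle : Prop := ∀ p, Q.IsPath p → Q.src p ≠ Q.tgt p

/-- `Q` has no multiple arrows: distinct arrows never have both the same source
and the same target. -/
def NoMultipleArrows : Prop :=
  ∀ a b : Q.A, Q.s a = Q.s b → Q.t a = Q.t b → a = b

/-- A bypass `(α, u)`: `u` is a path parallel to the arrow `α` and distinct from it. -/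
def IsBypass (α : Q.A) (u : List Q.A) : Prop :=
  Q.IsPath u ∧ Q.src u = some (Q.s α) ∧ Q.tgt u = some (Q.t α) ∧ u ≠ [α]

/-- `Repl n u v` : `v` is obtained from `u` by replacing `n` of its arrows (at
increasing positions) by bypass paths. -/
inductive Repl : ℕ → List Q.A → List Q.A → Prop
  | nil : Repl 0 [] []
  | keep (a : Q.A) {n : ℕ} {u v : List Q.A} : Repl n u v → Repl n (a :: u) (a :: v)
  | repl {a : Q.A} {p : List Q.A} {n : ℕ} {u v : List Q.A} :
      Q.IsBypass a p → Repl n u v → Repl (n + 1) (a :: u) (p ++ v)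

/-- `v` is derived of `u` of order `t`. -/
def DerivedOfOrder (t : ℕ) (u v : List Q.A) : Prop := 1 ≤ t ∧ Q.Repl t u v

/-- `v` is derived of `u` (of some order `t ≥ 1`). -/
def Derived (u v : List Q.A) : Prop := ∃ t, Q.DerivedOfOrder t u v

/-- `W(α)` : the number of bypasses of the form `(α, u)`. -/
noncomputable def Wa (α : Q.A) : ℕ := Nat.card {u : List Q.A // Q.IsBypass α u}

/-- `W(u)` for a path `u = α_n ⋯ α_1` : the sum of the `W(α_i)`. -/
noncomputable def Wp (u : List Q.A) : ℕ := (u.map Q.Wa).sum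

/-- A linear order `<` on the nontrivial paths of `Q` refining the `W`-ordering and
compatible with concatenation, as in Le Meur's Definition 2.5. -/
structure PathOrder where
  lt : List Q.A → List Q.A → Prop
  irrefl : ∀ p, Q.IsPath p → ¬ lt p p
  trans' : ∀ p q r, lt p q → lt q r → lt p r
  total' : ∀ p q, Q.IsPath p → Q.IsPath q → p ≠ q → lt p q ∨ lt q p
  wlt : ∀ p q, Q.IsPath p → Q.IsPath q → Q.Wp p < Q.Wp q → lt p q
  concat : ∀ u u' v v' : List Q.A, lt v u → lt v' u' →
    Q.IsPath (v ++ v') → Q.IsPath (u ++ u') → lt (v ++ v') (u ++ u')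

end Basic

/-- Lexicographic (strict) order on bypasses: `(α,u) < (β,v)` iff `α < β`, or
`α = β` and `u < v`. -/
def PathOrder.bplt {Q : Quiv} (o : Q.PathOrder) (b c : Q.A × List Q.A) : Prop :=
  o.lt [b.1] [c.1] ∨ (b.1 = c.1 ∧ o.lt b.2 c.2)

/-- Lexicographic non-strict order on bypasses. -/
def PathOrder.bple {Q : Quiv} (o : Q.PathOrder) (b c : Q.A × List Q.A) : Prop :=
  o.bplt b c ∨ b = c

section Linear

variable (Q : Quiv) (k : Type) [Field k]

/-- Concatenation product on the free `k`-module on lists of arrows (the morphism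
spaces of the path category `kQ`). -/
noncomputable def mulF (f g : List Q.A →₀ k) : List Q.A →₀ k :=
  f.sum fun p c => g.sum fun q d => Finsupp.single (p ++ q) (c * d)

/-- Image of the arrow `a` under the transvection `φ_{α,u,τ}`. -/
noncomputable def arrowImg (α : Q.A) (u : List Q.A) (τ : k) (a : Q.A) : List Q.A →₀ k :=
  if a = α then Finsupp.single [a] 1 + τ • Finsupp.single u 1 else Finsupp.single [a] 1

/-- Image of a path under the transvection `φ_{α,u,τ}`. -/
noncomputable def substPoly (α : Q.A) (u : List Q.A) (τ : k) : List Q.A → (List Q.A →₀ k)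
  | [] => Finsupp.single [] 1
  | a :: rest => mulF Q k (arrowImg Q k α u τ a) (substPoly α u τ rest)

/-- The transvection `φ_{α,u,τ}` as a linear endomorphism of `kQ` : it is the
`k`-linear automorphism of `kQ` fixing every vertex, sending `α` to `α + τ u`, and
fixing every other arrow. -/
noncomputable def substMap (α : Q.A) (u : List Q.A) (τ : k) :
    Module.End k (List Q.A →₀ k) :=
  Finsupp.linearCombination k (substPoly Q k α u τ)

/-- `ψ` lies in the group `T` generated by the transvections, i.e. it is a finite
product of transvections. -/
def MemT (ψ : Module.End k (List Q.A →₀ k)) : Prop :=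
  ∃ L : List (Q.A × List Q.A × k),
    (∀ x ∈ L, Q.IsBypass x.1 x.2.1) ∧
    ψ = (L.map fun x => substMap Q k x.1 x.2.1 x.2.2).prod

/-- `r'` is a subexpression of `r`. -/
def Subexpr (r' r : List Q.A →₀ k) : Prop :=
  r'.support ⊆ r.support ∧ ∀ p ∈ r'.support, r' p = r p

/-- A minimal relation of `I` : a nonzero `r ∈ I` such that `0` and `r` are the only
subexpressions of `r` lying in `I`. -/
def IsMinimalRel (I : Submodule k (List Q.A →₀ k)) (r : List Q.A →₀ k) : Prop :=
  r ∈ I ∧ r ≠ 0 ∧ ∀ r', Subexpr Q k r' r → r' ∈ I → r' = 0 ∨ r' = r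

/-- `ReplExp g u v c` : `v` is obtained from the path `u` by replacing some of its
arrows `a` (at increasing positions) by paths `w ∈ supp(g a)`, `w ≠ a`, and `c` is
the product of the corresponding coefficients `w^*(g a)`. -/
inductive ReplExp (g : Q.A → (List Q.A →₀ k)) : List Q.A → List Q.A → k → Prop
  | nil : ReplExp g [] [] 1
  | keep (a : Q.A) {u v : List Q.A} {c : k} :
      ReplExp g u v c → ReplExp g (a :: u) (a :: v) c
  | repl (a : Q.A) {w u v : List Q.A} {c : k} :
      w ∈ (g a).support → w ≠ [a] → ReplExp g u v c →
      ReplExp g (a :: u) (w ++ v) ((g a) w * c)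

/-- The homotopy relation `∼_I` on walks. A walk is a list of pairs `(a, d)` where
`a` is an arrow and `d` is `true` for `a` and `false` for the formal inverse `a⁻¹`;
the relation is the smallest equivalence relation compatible with concatenation,
cancelling `a a⁻¹` and `a⁻¹ a`, and identifying any two paths lying in the support
of a minimal relation of `I`. -/
inductive Homotopic (I : Submodule k (List Q.A →₀ k)) :
    List (Q.A × Bool) → List (Q.A × Bool) → Prop
  | refl (w : List (Q.A × Bool)) : Homotopic I w w
  | symm {w w' : List (Q.A × Bool)} : Homotopic I w w' → Homotopic I w' w
  | trans {w w' w'' : List (Q.A × Bool)} :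
      Homotopic I w w' → Homotopic I w' w'' → Homotopic I w w''
  | cancel (a : Q.A) : Homotopic I [(a, true), (a, false)] []
  | cancel' (a : Q.A) : Homotopic I [(a, false), (a, true)] []
  | rel {r : List Q.A →₀ k} (hr : IsMinimalRel Q k I r) {u v : List Q.A}
      (hu : u ∈ r.support) (hv : v ∈ r.support) :
      Homotopic I (u.map fun a => (a, true)) (v.map fun a => (a, true))
  | congr (w x : List (Q.A × Bool)) {v v' : List (Q.A × Bool)} :
      Homotopic I v v' → Homotopic I (w ++ v ++ x) (w ++ v' ++ x)

/-- `I` is a monomial admissible ideal of `kQ` : every element is a combination of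
paths of length `≥ 2`, membership is detected on supports (monomiality), and `I`
is stable under concatenation with paths on either side. -/
def IsMonomialAdmissible (I : Submodule k (List Q.A →₀ k)) : Prop :=
  (∀ r ∈ I, ∀ p ∈ (r : List Q.A →₀ k).support, Q.IsPath p ∧ 2 ≤ p.length) ∧
  (∀ r : List Q.A →₀ k, (∀ p ∈ r.support, Finsupp.single p (1 : k) ∈ I) → r ∈ I) ∧
  (∀ r ∈ I, ∀ p ∈ (r : List Q.A →₀ k).support, Finsupp.single p (1 : k) ∈ I) ∧
  (∀ p q : List Q.A, Q.IsPath p → Finsupp.single q (1 : k) ∈ I → Q.IsPath (p ++ q) →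
    Finsupp.single (p ++ q) (1 : k) ∈ I) ∧
  (∀ p q : List Q.A, Finsupp.single p (1 : k) ∈ I → Q.IsPath q → Q.IsPath (p ++ q) →
    Finsupp.single (p ++ q) (1 : k) ∈ I)

/-- A `k`-linear automorphism of `kQ` (fixing the vertices) is the transvection
`φ_{α,u,τ}` when its underlying linear map is `substMap α u τ`. -/
def IsTransvectionE (ψ : (List Q.A →₀ k) ≃ₗ[k] (List Q.A →₀ k))
    (α : Q.A) (u : List Q.A) (τ : k) : Prop :=
  (ψ : (List Q.A →₀ k) →ₗ[k] (List Q.A →₀ k)) = substMap Q k α u τ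

/-- The subgroup `T_{<(α,u)}` generated by the transvections `φ_{β,v,τ}` with
`(β,v) < (α,u)`. -/
noncomputable def TltSub (o : Q.PathOrder) (b : Q.A × List Q.A) :
    Subgroup ((List Q.A →₀ k) ≃ₗ[k] (List Q.A →₀ k)) :=
  Subgroup.closure
    {ψ | ∃ β v τ, Q.IsBypass β v ∧ o.bplt (β, v) b ∧ IsTransvectionE Q k ψ β v τ}

/-- The subgroup `T_{≤(α,u)}` generated by the transvections `φ_{β,v,τ}` with
`(β,v) ≤ (α,u)`. -/
noncomputable def TleSub (o : Q.PathOrder) (b : Q.A × List Q.A) :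
    Subgroup ((List Q.A →₀ k) ≃ₗ[k] (List Q.A →₀ k)) :=
  Subgroup.closure
    {ψ | ∃ β v τ, Q.IsBypass β v ∧ o.bple (β, v) b ∧ IsTransvectionE Q k ψ β v τ}

/-- The set `T_{(α,u)} = {φ_{α,u,τ} | τ ∈ k}`. -/
def TsingleSet (b : Q.A × List Q.A) :
    Set ((List Q.A →₀ k) ≃ₗ[k] (List Q.A →₀ k)) :=
  {ψ | ∃ τ : k, IsTransvectionE Q k ψ b.1 b.2 τ}

/-- `m` is the `<`-maximum of the support of `r`. -/
def IsMaxPath (o : Q.PathOrder) (r : List Q.A →₀ k) (m : List Q.A) : Prop :=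
  m ∈ r.support ∧ ∀ p ∈ r.support, p ≠ m → o.lt p m

/-- `B` is the Gröbner basis of the subspace `F` with respect to the path order `o` :
`B` spans `F` and each `r ∈ B` has a leading path `m` (with coefficient `1`, all other
paths of `supp r` being `<`-smaller) whose coefficient in every other element of `B`
vanishes. -/
def IsGB (o : Q.PathOrder) (F : Submodule k (List Q.A →₀ k))
    (B : Set (List Q.A →₀ k)) : Prop :=
  B ⊆ (F : Set (List Q.A →₀ k)) ∧ Submodule.span k B = F ∧
  ∀ r ∈ B, ∃ m, m ∈ (r : List Q.A →₀ k).support ∧ r m = 1 ∧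
    (∀ p ∈ (r : List Q.A →₀ k).support, p ≠ m → o.lt p m) ∧
    ∀ r' ∈ B, r' ≠ r → (r' : List Q.A →₀ k) m = 0

end Linear

section Aux

variable (Q : Quiv) (k : Type) [Field k]

lemma mulF_single_single (p q : List Q.A) (c d : k) :
    mulF Q k (Finsupp.single p c) (Finsupp.single q d) = Finsupp.single (p ++ q) (c * d) := by
  unfold mulF
  rw [Finsupp.sum_single_index (by simp), Finsupp.sum_single_index (by simp)]

lemma mulF_add_right (f g h : List Q.A →₀ k) :
    mulF Q k f (g + h) = mulF Q k f g + mulF Q k f h := by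
  unfold mulF
  rw [← Finsupp.sum_add]
  apply Finsupp.sum_congr
  intro p _
  exact Finsupp.sum_add_index' (by simp) (by intros; simp [mul_add, Finsupp.single_add])

lemma mulF_add_left (f g h : List Q.A →₀ k) :
    mulF Q k (f + g) h = mulF Q k f h + mulF Q k g h := by
  unfold mulF
  refine Finsupp.sum_add_index' (by simp) ?_
  intro a b₁ b₂
  rw [← Finsupp.sum_add]
  apply Finsupp.sum_congr
  intros
  simp [add_mul, Finsupp.single_add]

lemma substPoly_of_not_mem (α : Q.A) (u : List Q.A) (τ : k) {p : List Q.A} (hp : α ∉ p) :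
    substPoly Q k α u τ p = Finsupp.single p 1 := by
  induction p with
  | nil => rfl
  | cons a rest ih =>
    have ha : a ≠ α := fun h => hp (h ▸ (List.mem_cons_self (a := a) (l := rest)))
    rw [substPoly, arrowImg, if_neg ha, ih (fun h => hp (List.mem_cons_of_mem _ h)),
      mulF_single_single, one_mul, List.singleton_append]

lemma substPoly_key (α : Q.A) (u : List Q.A) (τ : k) {p₁ p₂ : List Q.A}
    (h1 : α ∉ p₁) (h2 : α ∉ p₂) :
    substPoly Q k α u τ (p₁ ++ α :: p₂) =
      Finsupp.single (p₁ ++ α :: p₂) 1 + Finsupp.single (p₁ ++ u ++ p₂) τ := by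
  induction p₁ with
  | nil =>
    rw [List.nil_append, substPoly, arrowImg, if_pos rfl,
      substPoly_of_not_mem Q k α u τ h2, Finsupp.smul_single', mul_one, mulF_add_left,
      mulF_single_single, mulF_single_single, one_mul, mul_one]
    simp
  | cons a p₁ ih =>
    have ha : a ≠ α := fun h => h1 (h ▸ (List.mem_cons_self (a := a) (l := p₁)))
    rw [List.cons_append, substPoly, arrowImg, if_neg ha,
      ih (fun h => h1 (List.mem_cons_of_mem _ h)), mulF_add_right,
      mulF_single_single, mulF_single_single, one_mul, one_mul]
    simp

lemma substMap_single (α : Q.A) (u : List Q.A) (τ : k) (p : List Q.A) (c : k) :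
    substMap Q k α u τ (Finsupp.single p c) = c • substPoly Q k α u τ p := by
  simp [substMap, Finsupp.linearCombination_single]

lemma not_two_occ {Q : Quiv} (hnc : Q.NoCycle) {p : List Q.A} (hp : Q.IsPath p) (α : Q.A)
    {p₁ q₁ q₂ : List Q.A} (heq : p = p₁ ++ α :: (q₁ ++ α :: q₂)) : False := by
  have hch : p.Chain' (fun a b => Q.t a = Q.s b) := hp.2
  rw [heq] at hch
  have hinf : (α :: (q₁ ++ [α])).Chain' (fun a b => Q.t a = Q.s b) := by
    apply hch.infix
    exact ⟨p₁, q₂, by simp⟩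
  rw [List.Chain', List.isChain_cons] at hinf
  obtain ⟨hhead, hz⟩ := hinf
  obtain ⟨h, hh⟩ : ∃ h, (q₁ ++ [α]).head? = some h := by cases q₁ <;> simp
  have hts : Q.t α = Q.s h := hhead h (by simp [hh])
  apply hnc (q₁ ++ [α]) ⟨by simp, hz⟩
  rw [Quiv.src, Quiv.tgt, hh, List.getLast?_concat]
  simp [← hts]

lemma decomp {Q : Quiv} (hnc : Q.NoCycle) {p : List Q.A} (hp : Q.IsPath p) {α : Q.A}
    (hmem : α ∈ p) : ∃ p₁ p₂, p = p₁ ++ α :: p₂ ∧ α ∉ p₁ ∧ α ∉ p₂ := by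
  obtain ⟨p₁, p₂, rfl⟩ := List.append_of_mem hmem
  refine ⟨p₁, p₂, rfl, ?_, ?_⟩
  · intro hα
    obtain ⟨r₁, r₂, rfl⟩ := List.append_of_mem hα
    exact not_two_occ (p₁ := r₁) (q₁ := r₂) (q₂ := p₂) hnc hp α (by simp)
  · intro hα
    obtain ⟨r₁, r₂, rfl⟩ := List.append_of_mem hα
    exact not_two_occ hnc hp α rfl

lemma not_mem_of_bypass {Q : Quiv} (hnc : Q.NoCycle) {α : Q.A} {u : List Q.A}
    (h : Q.IsBypass α u) : α ∉ u := by
  intro hmem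
  obtain ⟨⟨hne, hch⟩, hsrc, htgt, hnel⟩ := h
  obtain ⟨q₁, q₂, rfl⟩ := List.append_of_mem hmem
  cases q₁ with
  | nil =>
    rw [List.nil_append] at hch hsrc htgt hnel
    cases q₂ with
    | nil => exact hnel rfl
    | cons c r =>
      rw [List.Chain', List.isChain_cons] at hch
      apply hnc (c :: r) ⟨List.cons_ne_nil c r, hch.2⟩
      have h1 : Q.t α = Q.s c := hch.1 c rfl
      rw [Quiv.tgt, List.getLast?_cons_cons] at htgt
      rw [Quiv.src, Quiv.tgt, htgt]
      simp [← h1]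
  | cons c r =>
    rw [List.Chain', List.isChain_append] at hch
    obtain ⟨x, hx⟩ : ∃ x, (c :: r).getLast? = some x :=
      ⟨(c :: r).getLast (List.cons_ne_nil c r), List.getLast?_eq_getLast _⟩
    have hjun : Q.t x = Q.s α := hch.2.2 x (by simp [hx]) α rfl
    have hsc : Q.s c = Q.s α := by
      rw [Quiv.src] at hsrc
      simp at hsrc
      exact hsrc
    apply hnc (c :: r) ⟨List.cons_ne_nil c r, hch.1⟩
    simp [Quiv.src, Quiv.tgt, hx, hsc, hjun]

/-- The replacement condition: `I₀` is stable under replacing `α` by `u` in paths. -/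
def Cond (α : Q.A) (u : List Q.A) (I₀ : Submodule k (List Q.A →₀ k)) : Prop :=
  ∀ p₁ p₂ : List Q.A, α ∉ p₁ → α ∉ p₂ →
    Finsupp.single (p₁ ++ α :: p₂) (1 : k) ∈ I₀ →
    Finsupp.single (p₁ ++ u ++ p₂) (1 : k) ∈ I₀

lemma cond_of_map_eq {α : Q.A} {u : List Q.A} {I₀ : Submodule k (List Q.A →₀ k)}
    {τ : k} (hτ : τ ≠ 0) (hmap : Submodule.map (substMap Q k α u τ) I₀ = I₀) :
    Cond Q k α u I₀ := by
  intro p₁ p₂ h1 h2 hmem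
  have himg : substMap Q k α u τ (Finsupp.single (p₁ ++ α :: p₂) (1 : k)) ∈ I₀ := by
    rw [← hmap]
    exact Submodule.mem_map_of_mem hmem
  rw [substMap_single, one_smul, substPoly_key Q k α u τ h1 h2] at himg
  have h3 : Finsupp.single (p₁ ++ u ++ p₂) τ ∈ I₀ := by
    have := I₀.sub_mem himg hmem
    simpa using this
  have h4 := I₀.smul_mem τ⁻¹ h3
  rwa [Finsupp.smul_single', inv_mul_cancel₀ hτ] at h4

lemma map_eq_of_cond (hnc : Q.NoCycle) {α : Q.A} {u : List Q.A} (hαu : Q.IsBypass α u)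
    {I₀ : Submodule k (List Q.A →₀ k)} (hI₀ : IsMonomialAdmissible Q k I₀)
    (hC : Cond Q k α u I₀) (τ : k) :
    Submodule.map (substMap Q k α u τ) I₀ = I₀ := by
  have hαu' : α ∉ u := not_mem_of_bypass hnc hαu
  apply le_antisymm
  · rintro x ⟨r, hr, rfl⟩
    rw [substMap, Finsupp.linearCombination_apply, Finsupp.sum]
    apply Submodule.sum_mem
    intro p hp
    apply Submodule.smul_mem
    have hsp : Finsupp.single p (1 : k) ∈ I₀ := hI₀.2.2.1 r hr p hp
    have hpath : Q.IsPath p := (hI₀.1 r hr p hp).1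
    by_cases hα : α ∈ p
    · obtain ⟨p₁, p₂, rfl, hn1, hn2⟩ := decomp hnc hpath hα
      rw [substPoly_key Q k α u τ hn1 hn2]
      refine I₀.add_mem hsp ?_
      have h5 := I₀.smul_mem τ (hC p₁ p₂ hn1 hn2 hsp)
      rwa [Finsupp.smul_single', mul_one] at h5
    · rw [substPoly_of_not_mem Q k α u τ hα]
      exact hsp
  · intro r hr
    rw [← Finsupp.sum_single r, Finsupp.sum]
    apply Submodule.sum_mem
    intro p hp
    have hsp : Finsupp.single p (1 : k) ∈ I₀ := hI₀.2.2.1 r hr p hp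
    have hpath : Q.IsPath p := (hI₀.1 r hr p hp).1
    have key : Finsupp.single p (1 : k) ∈ Submodule.map (substMap Q k α u τ) I₀ := by
      by_cases hα : α ∈ p
      · obtain ⟨p₁, p₂, rfl, hn1, hn2⟩ := decomp hnc hpath hα
        have hq : Finsupp.single (p₁ ++ u ++ p₂) (1 : k) ∈ I₀ := hC _ _ hn1 hn2 hsp
        have hqn : α ∉ p₁ ++ u ++ p₂ := by simp [hn1, hn2, hαu']
        have m1 : Finsupp.single (p₁ ++ u ++ p₂) (1 : k) ∈
            Submodule.map (substMap Q k α u τ) I₀ :=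
          ⟨_, hq, by rw [substMap_single, one_smul, substPoly_of_not_mem Q k α u τ hqn]⟩
        have m2 : Finsupp.single (p₁ ++ α :: p₂) 1 + Finsupp.single (p₁ ++ u ++ p₂) τ ∈
            Submodule.map (substMap Q k α u τ) I₀ :=
          ⟨_, hsp, by rw [substMap_single, one_smul, substPoly_key Q k α u τ hn1 hn2]⟩
        have h6 := Submodule.sub_mem _ m2
          ((Submodule.map (substMap Q k α u τ) I₀).smul_mem τ m1)
        rwa [Finsupp.smul_single', mul_one, add_sub_cancel_right] at h6
      · exact ⟨_, hsp, by rw [substMap_single, one_smul, substPoly_of_not_mem Q k α u τ hα]⟩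
    have h7 := (Submodule.map (substMap Q k α u τ) I₀).smul_mem (r p) key
    rwa [Finsupp.smul_single', mul_one] at h7

end Aux

/-- Let `(α,u)` be a bypass in `Q`.  Then exactly one of the following
holds: either `φ_{α,u,τ}(I_0) = I_0` for every `τ ∈ k`, or `φ_{α,u,τ}(I_0) ≠ I_0`
for every `τ ∈ k^*`. -/
theorem stmt_15 (Q : Quiv) [Fintype Q.V] [Fintype Q.A]
    (k : Type) [Field k] [IsAlgClosed k]
    (hnc : Q.NoCycle) (hnm : Q.NoMultipleArrows)
    (I₀ : Submodule k (List Q.A →₀ k)) (hI₀ : IsMonomialAdmissible Q k I₀)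
    (α : Q.A) (u : List Q.A) (hαu : Q.IsBypass α u) :
    Xor' (∀ τ : k, Submodule.map (substMap Q k α u τ) I₀ = I₀)
      (∀ τ : k, τ ≠ 0 → Submodule.map (substMap Q k α u τ) I₀ ≠ I₀) := by
  by_cases hC : Cond Q k α u I₀
  · left
    refine ⟨fun τ => map_eq_of_cond Q k hnc hαu hI₀ hC τ, fun hB => ?_⟩
    exact hB 1 one_ne_zero (map_eq_of_cond Q k hnc hαu hI₀ hC 1)
  · right
    refine ⟨fun τ hτ hmap => hC (cond_of_map_eq Q k hτ hmap), fun hA => ?_⟩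
    exact hC (cond_of_map_eq Q k one_ne_zero (hA 1))


end Quiv
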